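/- Let A ∈ B^{n×n}, λ ∈ B, K, L a partition of N = {1,...,n}, with L_2, L̃, Λ and (A_{KK})^*_λ as defined, and suppose L_2 = ∅. Then x = (x_K, x_L) ∈ B^n is a (K,L) λ-eigenvector of A if and only if there exist z_{L̃} ∈ B^{|L̃|} and z_K ∈ B^{|K|} such that x_L = λ·1_L ⊕ Λ_{L,L̃} ⊗ z_{L̃} and x_K = λ ⊗ (A_{KK})^* ⊗ A_{KL} ⊗ 1_L ⊕ (A_{KK})^* ⊗ A_{K L̃} ⊗ Λ_{L̃,L̃} ⊗ z_{L̃} ⊕ (A_{KK})^*_λ ⊗ z_K. Moreover, every (K,L) λ-eigenvector x of A satisfies A^* ⊗ x = x. -/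
import Mathlib


noncomputable section

/-- The max-min algebra: the unit interval `[0,1] ⊆ ℝ` with `⊕ = max = ⊔` and `⊗ = min = ⊓`. -/
abbrev B : Type := unitInterval

instance : Fact ((0:ℝ) ≤ 1) := ⟨zero_le_one⟩

/-- Max-min matrix-vector product: `(A ⊗ x)_i = max_j min (A i j) (x j)`. -/
def mmVec {α β : Type*} (A : Matrix α β B) (x : β → B) : α → B :=
  fun i => ⨆ j, A i j ⊓ x j

/-- Max-min matrix-matrix product. -/
def mmMul {α β γ : Type*} (A : Matrix α β B) (C : Matrix β γ B) : Matrix α γ B :=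
  fun i k => ⨆ j, A i j ⊓ C j k

/-- The max-min identity matrix. -/
def mmId (α : Type*) [DecidableEq α] : Matrix α α B :=
  fun i j => if i = j then 1 else 0

/-- Max-min matrix powers, `A^0 = I`. -/
def mmPow {α : Type*} [DecidableEq α] (A : Matrix α α B) : ℕ → Matrix α α B
  | 0 => mmId α
  | k + 1 => mmMul A (mmPow A k)

/-- The metric matrix `A⁺ = A ⊕ A² ⊕ ... ⊕ Aⁿ`. -/
def mmPlus {α : Type*} [Fintype α] [DecidableEq α] (A : Matrix α α B) : Matrix α α B :=
  fun i j => ⨆ k ∈ Finset.Icc 1 (Fintype.card α), mmPow A k i j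

/-- The Kleene star `A* = I ⊕ A ⊕ ... ⊕ A^{n-1}`. -/
def mmStar {α : Type*} [Fintype α] [DecidableEq α] (A : Matrix α α B) : Matrix α α B :=
  fun i j => ⨆ k ∈ Finset.range (Fintype.card α), mmPow A k i j

/-- The matrix `A*_λ`, whose `i`-th column has entries `min (λ, (A⁺)_{ii}, (A*)_{ki})`. -/
def mmStarLam {α : Type*} [Fintype α] [DecidableEq α] (A : Matrix α α B) (lam : B) :
    Matrix α α B :=
  fun k i => lam ⊓ mmPlus A i i ⊓ mmStar A k i

/-- Submatrix of `A` with rows in `P` and columns in `Q`. -/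
def subM {n : ℕ} (A : Matrix (Fin n) (Fin n) B) (P Q : Finset (Fin n)) :
    Matrix ↥P ↥Q B :=
  fun i j => A i j

/-- Subvector of `x` indexed by `P`. -/
def subV {n : ℕ} (x : Fin n → B) (P : Finset (Fin n)) : ↥P → B :=
  fun i => x i

/-- `x` is a `(K,L)` `λ`-eigenvector of `A`: `A ⊗ x = λ ⊗ x`, `x_i ≤ λ` for `i ∈ K`,
`x_i ≥ λ` for `i ∈ L`. -/
def IsKLEig {n : ℕ} (A : Matrix (Fin n) (Fin n) B) (lam : B) (K L : Finset (Fin n))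
    (x : Fin n → B) : Prop :=
  mmVec A x = (fun i => lam ⊓ x i) ∧ (∀ i ∈ K, x i ≤ lam) ∧ (∀ i ∈ L, lam ≤ x i)

/-- `L₁ = {i ∈ L : max_{j∈L} a_{ij} ≥ λ}`. -/
def L1set {n : ℕ} (A : Matrix (Fin n) (Fin n) B) (lam : B) (L : Finset (Fin n)) :
    Finset (Fin n) :=
  L.filter fun i => lam ≤ ⨆ j ∈ L, A i j

/-- `L₂ = {i ∈ L : max_{j∈L} a_{ij} < λ}`. -/
def L2set {n : ℕ} (A : Matrix (Fin n) (Fin n) B) (lam : B) (L : Finset (Fin n)) :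
    Finset (Fin n) :=
  L.filter fun i => (⨆ j ∈ L, A i j) < lam

/-- `L^{>λ,L₁} = {k ∈ L : max_{i ∈ L₁} a_{ik} > λ}`. -/
def LgtL1set {n : ℕ} (A : Matrix (Fin n) (Fin n) B) (lam : B) (L : Finset (Fin n)) :
    Finset (Fin n) :=
  L.filter fun k => lam < ⨆ i ∈ L1set A lam L, A i k

/-- `L^{>λ,K} = {ℓ ∈ L : max_{k ∈ K} ((A_{KK})* ⊗ A_{KL})_{kℓ} > λ}`. (The matrix
`(A_{KK})* ⊗ A_{K,N}` has, for `ℓ ∈ L`, exactly the same entries in column `ℓ` as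
`(A_{KK})* ⊗ A_{KL}`.) -/
def LgtKset {n : ℕ} (A : Matrix (Fin n) (Fin n) B) (lam : B) (K L : Finset (Fin n)) :
    Finset (Fin n) :=
  L.filter fun ℓ =>
    lam < ⨆ k : ↥K, mmMul (mmStar (subM A K K)) (fun (p : ↥K) (q : Fin n) => A p q) k ℓ

/-- `L' = L^{>λ,L₁} ∪ L^{>λ,K}`. -/
def LprimeSet {n : ℕ} (A : Matrix (Fin n) (Fin n) B) (lam : B) (K L : Finset (Fin n)) :
    Finset (Fin n) :=
  LgtL1set A lam L ∪ LgtKset A lam K L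

/-- `L̃ = L \ L'`. -/
def LtilSet {n : ℕ} (A : Matrix (Fin n) (Fin n) B) (lam : B) (K L : Finset (Fin n)) :
    Finset (Fin n) :=
  L \ LprimeSet A lam K L

/-- The submatrix `Λ_{P,Q}` of the matrix `Λ` with `Λ_{ii} = 1` and `Λ_{ij} = λ` for `i ≠ j`. -/
def LamSub {n : ℕ} (lam : B) (P Q : Finset (Fin n)) : Matrix ↥P ↥Q B :=
  fun p q => if (p : Fin n) = (q : Fin n) then 1 else lam

section Aux
open Finset

lemma botB : (⊥ : B) = 0 := by
  apply le_antisymm bot_le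
  exact Subtype.coe_le_coe.mp (by exact_mod_cast (⊥ : B).2.1)

lemma le_oneB (x : B) : x ≤ (1:B) := unitInterval.le_one x

lemma zero_leB (x : B) : (0:B) ≤ x := unitInterval.nonneg'

lemma le_iSupB {ι : Type*} [Finite ι] {c : B} {f : ι → B} (h0 : 0 < c) :
    c ≤ ⨆ j, f j ↔ ∃ j, c ≤ f j := by
  constructor
  · intro h
    cases isEmpty_or_nonempty ι with
    | inl he => rw [iSup_of_empty, botB] at h; exact absurd (le_antisymm h (zero_leB c)) (ne_of_gt h0)
    | inr hne =>
      obtain ⟨j, hj⟩ := Finite.exists_max f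
      exact ⟨j, h.trans (iSup_le hj)⟩
  · rintro ⟨j, hj⟩; exact hj.trans (le_iSup f j)

lemma mmVec_mono {α β : Type*} (A : Matrix α β B) {u v : β → B} (h : ∀ j, u j ≤ v j) (i : α) :
    mmVec A u i ≤ mmVec A v i :=
  iSup_mono fun j => inf_le_inf_left _ (h j)

lemma mmVec_mono_mat {α β : Type*} {A C : Matrix α β B} (h : ∀ i j, A i j ≤ C i j) (x : β → B) (i : α) :
    mmVec A x i ≤ mmVec C x i :=
  iSup_mono fun j => inf_le_inf_right _ (h i j)

lemma mmVec_assoc {α β γ : Type*} (A : Matrix α β B) (C : Matrix β γ B) (x : γ → B) (i : α) :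
    mmVec (mmMul A C) x i = mmVec A (mmVec C x) i := by
  unfold mmVec mmMul
  simp only [iSup_inf_eq, inf_iSup_eq]
  rw [iSup_comm]
  exact iSup_congr fun k => iSup_congr fun j => by rw [inf_assoc]

lemma mmVec_sup {α β : Type*} (A : Matrix α β B) (u v : β → B) (i : α) :
    mmVec A (fun j => u j ⊔ v j) i = mmVec A u i ⊔ mmVec A v i := by
  unfold mmVec
  simp only [inf_sup_left, iSup_sup_eq]

lemma mmVec_matSup {α β : Type*} (A C : Matrix α β B) (x : β → B) (i : α) :
    mmVec (fun i j => A i j ⊔ C i j) x i = mmVec A x i ⊔ mmVec C x i := by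
  unfold mmVec
  simp only [inf_sup_right, iSup_sup_eq]

lemma mmVec_inf_const {α β : Type*} (A : Matrix α β B) (c : B) (u : β → B) (i : α) :
    mmVec A (fun j => c ⊓ u j) i = c ⊓ mmVec A u i := by
  unfold mmVec
  rw [inf_iSup_eq]
  exact iSup_congr fun j => by rw [inf_left_comm]

lemma mmVec_id {α : Type*} [DecidableEq α] (x : α → B) (i : α) :
    mmVec (mmId α) x i = x i := by
  unfold mmVec mmId
  apply le_antisymm
  · apply iSup_le fun j => ?_
    by_cases h : i = j
    · subst h; simp [inf_le_right]
    · simp only [h, if_false]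
      exact le_trans inf_le_left (zero_leB _)
  · refine le_trans ?_ (le_iSup _ i)
    simp only [if_pos rfl]
    exact le_inf (unitInterval.le_one (x i)) le_rfl

end Aux

section Aux2
open Finset

variable {α : Type*} [Fintype α] [DecidableEq α]
set_option linter.unusedSectionVars false

lemma iSup_inf_id_right (f : α → B) (j : α) :
    ⨆ k, f k ⊓ (if k = j then (1:B) else 0) = f j := by
  apply le_antisymm
  · apply iSup_le fun k => ?_
    by_cases h : k = j
    · subst h; exact inf_le_left
    · simp only [if_neg h]
      exact le_trans inf_le_right (zero_leB _)
  · refine le_trans ?_ (le_iSup _ j)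
    simp only [if_pos rfl]
    exact le_inf le_rfl (unitInterval.le_one _)

lemma iSup_id_inf_left (f : α → B) (i : α) :
    ⨆ k, (if i = k then (1:B) else 0) ⊓ f k = f i := by
  apply le_antisymm
  · apply iSup_le fun k => ?_
    by_cases h : i = k
    · subst h; exact inf_le_right
    · simp only [if_neg h]
      exact le_trans inf_le_left (zero_leB _)
  · refine le_trans ?_ (le_iSup _ i)
    simp only [if_pos rfl]
    exact le_inf (unitInterval.le_one _) le_rfl

lemma mmPow_succ_right (A : Matrix α α B) (p : ℕ) (i j : α) :
    mmPow A (p+1) i j = ⨆ k, mmPow A p i k ⊓ A k j := by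
  induction p generalizing i j with
  | zero =>
    show mmMul A (mmId α) i j = _
    unfold mmMul mmId mmPow mmId
    rw [iSup_inf_id_right (fun k => A i k) j, iSup_id_inf_left (fun k => A k j) i]
  | succ p ih =>
    show mmMul A (mmPow A (p+1)) i j = _
    unfold mmMul
    calc ⨆ k, A i k ⊓ mmPow A (p+1) k j
        = ⨆ k, A i k ⊓ ⨆ l, mmPow A p k l ⊓ A l j := by
          exact iSup_congr fun k => by rw [ih]
      _ = ⨆ k, ⨆ l, A i k ⊓ (mmPow A p k l ⊓ A l j) := by
          exact iSup_congr fun k => inf_iSup_eq _ _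
      _ = ⨆ l, ⨆ k, (A i k ⊓ mmPow A p k l) ⊓ A l j := by
          rw [iSup_comm]
          exact iSup_congr fun l => iSup_congr fun k => by rw [inf_assoc]
      _ = ⨆ l, (⨆ k, A i k ⊓ mmPow A p k l) ⊓ A l j := by
          exact iSup_congr fun l => (iSup_inf_eq _ _).symm
      _ = ⨆ l, mmPow A (p+1) i l ⊓ A l j := rfl

/-- Threshold path characterization of powers. -/
lemma pow_le_iff (A : Matrix α α B) {c : B} (h0 : 0 < c) (p : ℕ) (i j : α) :
    c ≤ mmPow A p i j ↔
      ∃ v : ℕ → α, v 0 = i ∧ v p = j ∧ ∀ t < p, c ≤ A (v t) (v (t+1)) := by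
  induction p generalizing i j with
  | zero =>
    constructor
    · intro h
      by_cases hij : i = j
      · exact ⟨fun _ => i, rfl, hij, fun t ht => absurd ht (Nat.not_lt_zero t)⟩
      · exfalso
        simp only [mmPow, mmId, if_neg hij] at h
        exact absurd (le_antisymm h (zero_leB c)) (ne_of_gt h0)
    · rintro ⟨v, h1, h2, -⟩
      have : i = j := h1 ▸ h2
      simp only [this, mmPow, mmId, if_pos rfl]
      exact unitInterval.le_one c
  | succ p ih =>
    have hrw : mmPow A (p+1) i j = ⨆ k, A i k ⊓ mmPow A p k j := rfl
    rw [hrw, le_iSupB h0]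
    constructor
    · rintro ⟨k, hk⟩
      rw [le_inf_iff, ih] at hk
      obtain ⟨hik, v, hv0, hvp, hve⟩ := hk
      refine ⟨fun t => if t = 0 then i else v (t-1), if_pos rfl, by simp [hvp], fun t ht => ?_⟩
      cases t with
      | zero => simpa [hv0] using hik
      | succ s => simpa using hve s (by omega)
    · rintro ⟨v, hv0, hvp, hve⟩
      refine ⟨v 1, le_inf (hv0 ▸ hve 0 (by omega)) ?_⟩
      rw [ih]
      exact ⟨fun t => v (t+1), rfl, hvp, fun t ht => hve (t+1) (by omega)⟩

/-- From a path of length p get `c ≤ A^p`. -/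
lemma path_le_pow (A : Matrix α α B) {c : B} (h0 : 0 < c) (p : ℕ) (v : ℕ → α)
    (hve : ∀ t < p, c ≤ A (v t) (v (t+1))) : c ≤ mmPow A p (v 0) (v p) :=
  (pow_le_iff A h0 p _ _).mpr ⟨v, rfl, rfl, hve⟩

lemma pow_le_star (A : Matrix α α B) {p : ℕ} (hp : p < Fintype.card α) (i j : α) :
    mmPow A p i j ≤ mmStar A i j :=
  le_iSup₂_of_le p (Finset.mem_range.mpr hp) le_rfl

lemma pow_le_plus (A : Matrix α α B) {p : ℕ} (hp1 : 1 ≤ p) (hp : p ≤ Fintype.card α) (i j : α) :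
    mmPow A p i j ≤ mmPlus A i j :=
  le_iSup₂_of_le p (Finset.mem_Icc.mpr ⟨hp1, hp⟩) le_rfl

/-- Shortcut a path with a repeated vertex. -/
lemma shortcut (A : Matrix α α B) {c : B} (h0 : 0 < c) {m : ℕ} (v : ℕ → α)
    (hve : ∀ t < m, c ≤ A (v t) (v (t+1))) {s t : ℕ} (hst : s < t) (htm : t ≤ m)
    (heq : v s = v t) :
    c ≤ mmPow A (m - (t - s)) (v 0) (v m) := by
  set w : ℕ → α := fun r => if r ≤ s then v r else v (r + (t - s)) with hw
  have key := path_le_pow A h0 (m - (t - s)) w (fun r hr => ?_)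
  · have h1 : w 0 = v 0 := by rw [hw]; simp
    have h2 : w (m - (t - s)) = v m := by
      rw [hw]
      by_cases h : m - (t - s) ≤ s
      · have hps : m - (t - s) = s := by omega
        have htm' : t = m := by omega
        simp only [if_pos h, hps, heq]
        rw [if_pos le_rfl, htm']
      · simp only [if_neg h]
        congr 1
        omega
    rwa [h1, h2] at key
  · rcases lt_trichotomy r s with h | h | h
    · have e1 : w r = v r := by rw [hw]; simp only [if_pos (by omega : r ≤ s)]
      have e2 : w (r+1) = v (r+1) := by rw [hw]; simp only [if_pos (by omega : r+1 ≤ s)]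
      rw [e1, e2]
      exact hve r (by omega)
    · have e1 : w r = v t := by
        rw [hw]
        simp only []
        rw [if_pos (by omega : r ≤ s), h, heq]
      have e2 : w (r+1) = v (t+1) := by
        rw [hw]
        simp only [if_neg (by omega : ¬ r+1 ≤ s)]
        congr 1
        omega
      rw [e1, e2]
      exact hve t (by omega)
    · have e1 : w r = v (r + (t-s)) := by rw [hw]; simp only [if_neg (by omega : ¬ r ≤ s)]
      have e2 : w (r+1) = v (r + (t-s) + 1) := by
        rw [hw]
        simp only [if_neg (by omega : ¬ r+1 ≤ s)]
        congr 1
        omega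
      rw [e1, e2]
      exact hve (r + (t-s)) (by omega)

/-- Pigeonhole repeated vertex on a path of length `card α`. -/
lemma exists_repeat {m : ℕ} (hm : m = Fintype.card α) (v : ℕ → α) :
    ∃ s t : ℕ, s < t ∧ t ≤ m ∧ v s = v t := by
  have hninj : ¬ Function.Injective (fun r : Fin (m+1) => v r) := by
    intro hinj
    have := Fintype.card_le_of_injective _ hinj
    simp [hm] at this
  rw [Function.not_injective_iff] at hninj
  obtain ⟨s', t', hst, hne⟩ := hninj
  rcases lt_or_gt_of_ne hne with hlt | hlt
  · exact ⟨s', t', hlt, Fin.is_le t', hst⟩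
  · exact ⟨t', s', hlt, Fin.is_le s', hst.symm⟩

/-- Pigeonhole: `A^m ≤ A*` where `m = card α`. -/
lemma powCard_le_star (A : Matrix α α B) (i j : α) :
    mmPow A (Fintype.card α) i j ≤ mmStar A i j := by
  set m := Fintype.card α with hm
  set c := mmPow A m i j with hc
  rcases eq_or_lt_of_le (zero_leB c) with h0 | h0
  · rw [← h0]; exact zero_leB _
  obtain ⟨v, hv0, hvm, hve⟩ := (pow_le_iff A h0 m i j).mp le_rfl
  obtain ⟨s, t, hst, htm, heq⟩ := exists_repeat hm v
  have := shortcut A h0 v hve hst htm heq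
  rw [hv0, hvm] at this
  exact this.trans (pow_le_star A (by omega) i j)

lemma pow_le_star' (A : Matrix α α B) {p : ℕ} (hp : p ≤ Fintype.card α) (i j : α) :
    mmPow A p i j ≤ mmStar A i j := by
  rcases eq_or_lt_of_le hp with h | h
  · subst h; exact powCard_le_star A i j
  · exact pow_le_star A h i j

lemma plus_le_star (A : Matrix α α B) (i j : α) : mmPlus A i j ≤ mmStar A i j := by
  apply iSup₂_le fun p hp => ?_
  rw [Finset.mem_Icc] at hp
  exact pow_le_star' A hp.2 i j

end Aux2

section Aux3
open Finset
set_option linter.unusedSectionVars false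

variable {α β : Type*} [Fintype α] [DecidableEq α]

lemma mmVec_congr {A : Matrix α β B} {u v : β → B} (h : ∀ j, u j = v j) (i : α) :
    mmVec A u i = mmVec A v i :=
  iSup_congr fun j => by rw [h j]

lemma mmVec_biSupMat (s : Finset ℕ) (M : ℕ → Matrix α α B) (x : α → B) (i : α) :
    mmVec (fun i j => ⨆ p ∈ s, M p i j) x i = ⨆ p ∈ s, mmVec (M p) x i := by
  unfold mmVec
  calc ⨆ j, (⨆ p ∈ s, M p i j) ⊓ x j
      = ⨆ j, ⨆ p, ⨆ _ : p ∈ s, (M p i j ⊓ x j) := by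
        refine iSup_congr fun j => ?_
        rw [iSup_inf_eq]
        exact iSup_congr fun p => by rw [iSup_inf_eq]
    _ = ⨆ p, ⨆ _ : p ∈ s, ⨆ j, (M p i j ⊓ x j) := by
        rw [iSup_comm]
        exact iSup_congr fun p => iSup_comm

lemma mmVec_biSupVec (s : Finset ℕ) (A : Matrix α β B) (u : ℕ → β → B) (i : α) :
    mmVec A (fun j => ⨆ p ∈ s, u p j) i = ⨆ p ∈ s, mmVec A (u p) i := by
  unfold mmVec
  calc ⨆ j, A i j ⊓ (⨆ p ∈ s, u p j)
      = ⨆ j, ⨆ p, ⨆ _ : p ∈ s, (A i j ⊓ u p j) := by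
        refine iSup_congr fun j => ?_
        rw [inf_iSup_eq]
        exact iSup_congr fun p => by rw [inf_iSup_eq]
    _ = ⨆ p, ⨆ _ : p ∈ s, ⨆ j, (A i j ⊓ u p j) := by
        rw [iSup_comm]
        exact iSup_congr fun p => iSup_comm

lemma mmVec_star_eq (A : Matrix α α B) (x : α → B) (i : α) :
    mmVec (mmStar A) x i = ⨆ p ∈ Finset.range (Fintype.card α), mmVec (mmPow A p) x i :=
  mmVec_biSupMat _ _ x i

lemma mmVec_plus_eq (A : Matrix α α B) (x : α → B) (i : α) :
    mmVec (mmPlus A) x i = ⨆ p ∈ Finset.Icc 1 (Fintype.card α), mmVec (mmPow A p) x i :=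
  mmVec_biSupMat _ _ x i

lemma mmVec_pow_succ (A : Matrix α α B) (p : ℕ) (x : α → B) (i : α) :
    mmVec (mmPow A (p+1)) x i = mmVec A (mmVec (mmPow A p) x) i :=
  mmVec_assoc A (mmPow A p) x i

lemma mmVec_pow_succ' (A : Matrix α α B) (p : ℕ) (x : α → B) (i : α) :
    mmVec (mmPow A (p+1)) x i = mmVec (mmPow A p) (mmVec A x) i := by
  have h : mmVec (mmPow A (p+1)) x i = mmVec (mmMul (mmPow A p) A) x i := by
    refine iSup_congr fun j => ?_
    rw [mmPow_succ_right]
    rfl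
  rw [h, mmVec_assoc]

lemma pow_vec_le (A : Matrix α α B) {x : α → B} (hx : ∀ k, mmVec A x k ≤ x k) (p : ℕ)
    (k : α) : mmVec (mmPow A p) x k ≤ x k := by
  induction p generalizing k with
  | zero => rw [show mmPow A 0 = mmId α from rfl, mmVec_id]
  | succ p ih =>
    rw [mmVec_pow_succ]
    exact le_trans (mmVec_mono A (fun j => ih j) k) (hx k)

lemma star_vec_le (A : Matrix α α B) {x : α → B} (hx : ∀ k, mmVec A x k ≤ x k) (k : α) :
    mmVec (mmStar A) x k ≤ x k := by
  rw [mmVec_star_eq]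
  exact iSup₂_le fun p _ => pow_vec_le A hx p k

lemma le_star_vec (A : Matrix α α B) (b : α → B) (k : α) :
    b k ≤ mmVec (mmStar A) b k := by
  rw [mmVec_star_eq]
  have h0 : (0:ℕ) ∈ Finset.range (Fintype.card α) :=
    Finset.mem_range.mpr (Fintype.card_pos_iff.mpr ⟨k⟩)
  refine le_trans ?_ (le_iSup₂_of_le 0 h0 le_rfl)
  rw [show mmPow A 0 = mmId α from rfl, mmVec_id]

lemma starLam_le_star (A : Matrix α α B) (lam : B) (z : α → B) (k : α) :
    mmVec (mmStarLam A lam) z k ≤ mmVec (mmStar A) z k :=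
  mmVec_mono_mat (fun i j => inf_le_right) z k

/-- `A ⊗ (A* ⊗ b) ⊔ b = A* ⊗ b`. -/
lemma star_fixed (A : Matrix α α B) (b : α → B) (k : α) :
    mmVec A (mmVec (mmStar A) b) k ⊔ b k = mmVec (mmStar A) b k := by
  apply le_antisymm
  · apply sup_le ?_ (le_star_vec A b k)
    -- A ⊗ S ⊗ b ≤ A⁺ ⊗ b ≤ S ⊗ b
    have h1 : mmVec A (mmVec (mmStar A) b) k = mmVec (mmPlus A) b k := by
      rw [mmVec_plus_eq]
      have := mmVec_congr (A := A) (fun j => mmVec_star_eq A b j) k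
      rw [this, mmVec_biSupVec]
      have hre : ∀ p ∈ Finset.range (Fintype.card α),
          mmVec A (mmVec (mmPow A p) b) k = mmVec (mmPow A (p+1)) b k := fun p _ =>
        (mmVec_pow_succ A p b k).symm
      apply le_antisymm
      · refine iSup₂_le fun p hp => ?_
        rw [hre p hp]
        refine le_iSup₂_of_le (p+1) ?_ le_rfl
        rw [Finset.mem_range] at hp
        exact Finset.mem_Icc.mpr ⟨by omega, by omega⟩
      · refine iSup₂_le fun q hq => ?_
        rw [Finset.mem_Icc] at hq
        obtain ⟨h1, h2⟩ := hq
        have hq' : q - 1 + 1 = q := by omega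
        refine le_iSup₂_of_le (q-1) (Finset.mem_range.mpr (by omega)) ?_
        rw [hre (q-1) (Finset.mem_range.mpr (by omega)), hq']
    rw [h1]
    exact mmVec_mono_mat (fun i j => plus_le_star A i j) b k
  · rw [mmVec_star_eq]
    refine iSup₂_le fun p hp => ?_
    cases p with
    | zero => rw [show mmPow A 0 = mmId α from rfl, mmVec_id]; exact le_sup_right
    | succ p =>
      rw [mmVec_pow_succ]
      refine le_trans (mmVec_mono A (fun j => ?_) k) le_sup_left
      rw [mmVec_star_eq]
      rw [Finset.mem_range] at hp
      exact le_iSup₂_of_le p (Finset.mem_range.mpr (by omega)) le_rfl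

/-- Matrix version: `(A ⊗ A*) i j = A⁺ i j`. -/
lemma mul_star_eq_plus (A : Matrix α α B) (i j : α) :
    mmMul A (mmStar A) i j = mmPlus A i j := by
  have hcol : ∀ l, mmStar A l j = mmVec (mmStar A) (fun r => if r = j then 1 else 0) l := by
    intro l
    rw [show mmVec (mmStar A) (fun r => if r = j then 1 else 0) l
        = ⨆ r, mmStar A l r ⊓ (if r = j then 1 else 0) from rfl, iSup_inf_id_right]
  have h1 : mmMul A (mmStar A) i j = mmVec A (fun l => mmStar A l j) i := rfl
  rw [h1, mmVec_congr hcol]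
  have h2 := star_fixed A (fun r => if r = j then (1:B) else 0) i
  -- instead compute directly like in star_fixed
  have h3 : mmVec A (mmVec (mmStar A) (fun r => if r = j then (1:B) else 0)) i
      = mmVec (mmPlus A) (fun r => if r = j then (1:B) else 0) i := by
    rw [mmVec_plus_eq]
    rw [mmVec_congr (A := A) (fun l => mmVec_star_eq A _ l), mmVec_biSupVec]
    have hre : ∀ p, mmVec A (mmVec (mmPow A p) (fun r => if r = j then (1:B) else 0)) i
        = mmVec (mmPow A (p+1)) (fun r => if r = j then (1:B) else 0) i := fun p =>
      (mmVec_pow_succ A p _ i).symm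
    apply le_antisymm
    · refine iSup₂_le fun p hp => ?_
      rw [hre p]
      rw [Finset.mem_range] at hp
      exact le_iSup₂_of_le (p+1) (Finset.mem_Icc.mpr ⟨by omega, by omega⟩) le_rfl
    · refine iSup₂_le fun q hq => ?_
      rw [Finset.mem_Icc] at hq
      have hq' : q - 1 + 1 = q := by omega
      refine le_iSup₂_of_le (q-1) (Finset.mem_range.mpr (by omega)) ?_
      rw [hre (q-1), hq']
  rw [h3]
  rw [show mmVec (mmPlus A) (fun r => if r = j then (1:B) else 0) i
      = ⨆ r, mmPlus A i r ⊓ (if r = j then 1 else 0) from rfl, iSup_inf_id_right]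

/-- `(A ⊗ A*_λ) = A*_λ` entrywise. -/
lemma mul_starLam_eq (A : Matrix α α B) (lam : B) (k i : α) :
    mmMul A (mmStarLam A lam) k i = mmStarLam A lam k i := by
  have h1 : mmMul A (mmStarLam A lam) k i
      = lam ⊓ mmPlus A i i ⊓ (mmMul A (mmStar A) k i) := by
    show (⨆ j, A k j ⊓ (lam ⊓ mmPlus A i i ⊓ mmStar A j i)) = _
    rw [show mmMul A (mmStar A) k i = ⨆ j, A k j ⊓ mmStar A j i from rfl, inf_iSup_eq]
    exact iSup_congr fun j => by ac_rfl
  rw [h1, mul_star_eq_plus]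
  show lam ⊓ mmPlus A i i ⊓ mmPlus A k i = lam ⊓ mmPlus A i i ⊓ mmStar A k i
  apply le_antisymm
  · exact inf_le_inf_left _ (plus_le_star A k i)
  · -- lam ⊓ P_ii ⊓ S_ki ≤ lam ⊓ P_ii ⊓ A⁺_ki
    refine le_inf inf_le_left ?_
    rw [show mmStar A k i = ⨆ p ∈ Finset.range (Fintype.card α), mmPow A p k i from rfl]
    rw [inf_iSup_eq]
    refine iSup_le fun p => ?_
    rw [inf_iSup_eq]
    refine iSup_le fun hp => ?_
    rw [Finset.mem_range] at hp
    cases p with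
    | zero =>
      show lam ⊓ mmPlus A i i ⊓ mmId α k i ≤ mmPlus A k i
      by_cases h : k = i
      · subst h; exact le_trans inf_le_left inf_le_right
      · simp only [mmId, if_neg h]
        exact le_trans inf_le_right (zero_leB _)
    | succ p =>
      exact le_trans inf_le_right (pow_le_plus A (by omega) (by omega) k i)

/-- Backward fixed point: `x = A*⊗b ⊔ A*_λ⊗z` satisfies `A⊗x ⊔ b = x`. -/
lemma bwd_fixed (A : Matrix α α B) (lam : B) (b z : α → B) (k : α) :
    mmVec A (fun j => mmVec (mmStar A) b j ⊔ mmVec (mmStarLam A lam) z j) k ⊔ b k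
      = mmVec (mmStar A) b k ⊔ mmVec (mmStarLam A lam) z k := by
  rw [mmVec_sup]
  have h2 : mmVec A (mmVec (mmStarLam A lam) z) k = mmVec (mmStarLam A lam) z k := by
    rw [← mmVec_assoc]
    exact iSup_congr fun i => by rw [mul_starLam_eq]
  rw [h2]
  rw [sup_right_comm]
  rw [star_fixed A b k]

end Aux3

section Aux4
open Finset
set_option linter.unusedSectionVars false
set_option linter.unusedVariables false

variable {α : Type*} [Fintype α] [DecidableEq α]

lemma unroll (A : Matrix α α B) {x b : α → B} (heq : ∀ k, mmVec A x k ⊔ b k = x k)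
    {p : ℕ} (hp : p ≤ Fintype.card α) (k : α) :
    x k ≤ mmVec (mmPow A p) x k ⊔ mmVec (mmStar A) b k := by
  induction p generalizing k with
  | zero =>
    rw [show mmPow A 0 = mmId α from rfl, mmVec_id]
    exact le_sup_left
  | succ p ih =>
    refine le_trans (ih (by omega) k) (sup_le ?_ le_sup_right)
    have h1 : mmVec (mmPow A p) x k
        = mmVec (mmPow A p) (fun j => mmVec A x j ⊔ b j) k :=
      (mmVec_congr (fun j => heq j) k).symm
    rw [h1, mmVec_sup]
    apply sup_le
    · rw [← mmVec_pow_succ']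
      exact le_sup_left
    · refine le_trans ?_ le_sup_right
      rw [mmVec_star_eq]
      exact le_iSup₂_of_le p (Finset.mem_range.mpr (by omega)) le_rfl

/-- Forward key lemma: a λ-bounded solution of `x = A⊗x ⊔ b` decomposes. -/
lemma fwd_decomp (A : Matrix α α B) (lam : B) {x b : α → B} (hxl : ∀ k, x k ≤ lam)
    (heq : ∀ k, mmVec A x k ⊔ b k = x k) (k : α) :
    x k = mmVec (mmStar A) b k ⊔ mmVec (mmStarLam A lam) x k := by
  have hAx : ∀ j, mmVec A x j ≤ x j := fun j => (heq j) ▸ le_sup_left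
  have hbx : ∀ j, b j ≤ x j := fun j => (heq j) ▸ le_sup_right
  apply le_antisymm
  swap
  · apply sup_le
    · exact le_trans (mmVec_mono (mmStar A) hbx k) (star_vec_le A hAx k)
    · exact le_trans (starLam_le_star A lam x k) (star_vec_le A hAx k)
  · by_contra hcon
    push_neg at hcon
    set c := x k with hc
    have h0 : 0 < c := lt_of_le_of_lt (zero_leB _) hcon
    set m := Fintype.card α with hm
    have hum := unroll A heq (le_refl m) k
    have hAm : c ≤ mmVec (mmPow A m) x k := by
      rcases le_sup_iff.mp hum with h | h
      · exact h
      · exact absurd h (not_le.mpr (lt_of_le_of_lt le_sup_left hcon))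
    rw [show mmVec (mmPow A m) x k = ⨆ j, mmPow A m k j ⊓ x j from rfl, le_iSupB h0] at hAm
    obtain ⟨j, hj⟩ := hAm
    rw [le_inf_iff] at hj
    obtain ⟨hjpow, hjx⟩ := hj
    obtain ⟨v, hv0, hvm, hve⟩ := (pow_le_iff A h0 m k j).mp hjpow
    obtain ⟨s, t, hst, htm, hrep⟩ := exists_repeat hm v
    -- c ≤ x (v r) for r ≤ m, downward induction
    have hdesc : ∀ d r, r + d = m → c ≤ x (v r) := by
      intro d
      induction d with
      | zero => intro r hr; have : r = m := by omega
                rw [this, hvm]; exact hjx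
      | succ d ih =>
        intro r hr
        have h1 : c ≤ x (v (r+1)) := ih (r+1) (by omega)
        have h2 : c ≤ mmVec A x (v r) := by
          refine le_trans (le_inf (hve r (by omega)) h1) ?_
          exact le_iSup (fun l => A (v r) l ⊓ x l) (v (r+1))
        exact le_trans h2 (hAx (v r))
    have hxi : c ≤ x (v s) := hdesc (m - s) s (by omega)
    have hS : c ≤ mmStar A k (v s) := by
      have := path_le_pow A h0 s v (fun r hr => hve r (by omega))
      rw [hv0] at this
      exact this.trans (pow_le_star A (by omega) k (v s))
    have hP : c ≤ mmPlus A (v s) (v s) := by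
      have := path_le_pow A h0 (t - s) (fun r => v (s + r)) (fun r hr => by
        show c ≤ A (v (s + r)) (v (s + (r + 1)))
        rw [show s + (r + 1) = s + r + 1 from by omega]
        exact hve (s + r) (by omega))
      simp only [Nat.add_zero] at this
      have e2 : s + (t - s) = t := by omega
      rw [e2, ← hrep] at this
      exact this.trans (pow_le_plus A (by omega) (by omega) (v s) (v s))
    have hfin : c ≤ mmVec (mmStarLam A lam) x k := by
      refine le_trans (le_inf (le_inf (le_inf (hxl k) hP) hS) hxi) ?_
      exact le_iSup (fun i => mmStarLam A lam k i ⊓ x i) (v s)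
    exact absurd (le_trans hfin le_sup_right) (not_le.mpr hcon)

end Aux4


/-- If `L₂ = ∅`, then `x` is a `(K,L)` `λ`-eigenvector of `A` iff there
are `z_{L̃}` and `z_K` with `x_L = λ·1_L ⊕ Λ_{L,L̃} ⊗ z_{L̃}` and
`x_K = λ ⊗ (A_{KK})* ⊗ A_{KL} ⊗ 1_L ⊕ (A_{KK})* ⊗ A_{KL̃} ⊗ Λ_{L̃,L̃} ⊗ z_{L̃}`
`⊕ (A_{KK})*_λ ⊗ z_K`. Moreover, every `(K,L)` `λ`-eigenvector `x` of `A` satisfies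
`A* ⊗ x = x`. -/
theorem stmt19 {n : ℕ} (A : Matrix (Fin n) (Fin n) B) (lam : B) (K L : Finset (Fin n))
    (hU : K ∪ L = Finset.univ) (hD : Disjoint K L)
    (hL2 : L2set A lam L = ∅) (x : Fin n → B) :
    (IsKLEig A lam K L x ↔
      ∃ (zLt : ↥(LtilSet A lam K L) → B) (zK : ↥K → B),
        (∀ ℓ : ↥L,
          x ℓ = lam ⊔ mmVec (LamSub lam L (LtilSet A lam K L)) zLt ℓ) ∧
        (∀ i : ↥K,
          x i =
            (lam ⊓ mmVec (mmMul (mmStar (subM A K K)) (subM A K L)) (fun _ => 1) i) ⊔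
            mmVec (mmMul (mmMul (mmStar (subM A K K)) (subM A K (LtilSet A lam K L)))
              (LamSub lam (LtilSet A lam K L) (LtilSet A lam K L))) zLt i ⊔
            mmVec (mmStarLam (subM A K K) lam) zK i)) ∧
    (IsKLEig A lam K L x → mmVec (mmStar A) x = x) := by
  classical
  have hmem : ∀ j : Fin n, j ∈ K ∨ j ∈ L := by
    intro j
    have : j ∈ K ∪ L := hU ▸ Finset.mem_univ j
    exact Finset.mem_union.mp this
  have hsplit : ∀ f : Fin n → B,
      (⨆ j, f j) = (⨆ j : ↥K, f ↑j) ⊔ (⨆ j : ↥L, f ↑j) := by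
    intro f
    apply le_antisymm
    · refine iSup_le fun j => ?_
      rcases hmem j with h | h
      · exact le_trans (le_iSup (fun j : ↥K => f ↑j) ⟨j, h⟩) le_sup_left
      · exact le_trans (le_iSup (fun j : ↥L => f ↑j) ⟨j, h⟩) le_sup_right
    · exact sup_le (iSup_le fun j => le_iSup f ↑j) (iSup_le fun j => le_iSup f ↑j)
  have hL1 : ∀ i ∈ L, lam ≤ ⨆ j ∈ L, A i j := by
    intro i hi
    by_contra hcon
    have : i ∈ L2set A lam L := Finset.mem_filter.mpr ⟨hi, not_le.mp hcon⟩
    rw [hL2] at this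
    exact absurd this (Finset.notMem_empty i)
  have hL1set : L1set A lam L = L := by
    apply Finset.filter_true_of_mem hL1
  have hLtL : LtilSet A lam K L ⊆ L := Finset.sdiff_subset
  -- entries of (A_KK)* ⊗ A_KL in columns of L̃ are ≤ λ
  have hTle : ∀ (k : ↥K) (ℓ : ↥L), (↑ℓ : Fin n) ∈ LtilSet A lam K L →
      mmMul (mmStar (subM A K K)) (subM A K L) k ℓ ≤ lam := by
    intro k ℓ hℓ
    have hnot : (↑ℓ : Fin n) ∉ LgtKset A lam K L := by
      intro h
      exact (Finset.mem_sdiff.mp hℓ).2 (Finset.mem_union_right _ h)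
    have : ¬ (lam < ⨆ k : ↥K,
        mmMul (mmStar (subM A K K)) (fun (p : ↥K) (q : Fin n) => A p q) k ℓ) := by
      intro h
      exact hnot (Finset.mem_filter.mpr ⟨ℓ.2, h⟩)
    have hle := not_lt.mp this
    refine le_trans ?_ hle
    exact le_iSup (fun k : ↥K =>
      mmMul (mmStar (subM A K K)) (fun (p : ↥K) (q : Fin n) => A p q) k ℓ) k
  -- entries of A restricted to L × L̃ are ≤ λ
  have hnotgt : ∀ j ∈ LtilSet A lam K L, ∀ i ∈ L, A i j ≤ lam := by
    intro j hj i hi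
    have hnot : j ∉ LgtL1set A lam L := by
      intro h
      exact (Finset.mem_sdiff.mp hj).2 (Finset.mem_union_left _ h)
    have : ¬ (lam < ⨆ i' ∈ L1set A lam L, A i' j) := by
      intro h
      exact hnot (Finset.mem_filter.mpr ⟨hLtL hj, h⟩)
    refine le_trans ?_ (not_lt.mp this)
    have hi' : i ∈ L1set A lam L := by rw [hL1set]; exact hi
    exact le_iSup₂_of_le i hi' le_rfl
  -- facts from formula (a)
  have hfromA : ∀ (zLt : ↥(LtilSet A lam K L) → B),
      (∀ ℓ : ↥L, x ↑ℓ = lam ⊔ mmVec (LamSub lam L (LtilSet A lam K L)) zLt ℓ) →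
      (∀ ℓ : ↥L, (↑ℓ : Fin n) ∉ LtilSet A lam K L → x ↑ℓ = lam) ∧
      (∀ (ℓ : ↥L) (h : (↑ℓ : Fin n) ∈ LtilSet A lam K L), x ↑ℓ = lam ⊔ zLt ⟨↑ℓ, h⟩) ∧
      (∀ ℓ : ↥L, lam ≤ x ↑ℓ) := by
    intro zLt ha
    refine ⟨?_, ?_, fun ℓ => (ha ℓ) ▸ le_sup_left⟩
    · intro ℓ hout
      rw [ha ℓ]
      refine sup_eq_left.mpr (iSup_le fun j => ?_)
      have hne : (↑ℓ : Fin n) ≠ ↑j := fun h => hout (h ▸ j.2)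
      rw [LamSub, if_neg hne]
      exact inf_le_left
    · intro ℓ h
      rw [ha ℓ]
      apply le_antisymm
      · refine sup_le le_sup_left (iSup_le fun j => ?_)
        by_cases hej : (↑ℓ : Fin n) = ↑j
        · have hje : (⟨↑ℓ, h⟩ : ↥(LtilSet A lam K L)) = j := Subtype.ext hej
          rw [LamSub, if_pos hej, ← hje]
          exact inf_le_right.trans le_sup_right
        · rw [LamSub, if_neg hej]
          exact inf_le_left.trans le_sup_left
      · refine sup_le le_sup_left (le_trans ?_ le_sup_right)
        refine le_trans ?_ (le_iSup _ (⟨↑ℓ, h⟩ : ↥(LtilSet A lam K L)))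
        rw [LamSub, if_pos rfl]
        exact le_inf (unitInterval.le_one _) le_rfl
  -- the (††) identity
  have hKid : ∀ (zLt : ↥(LtilSet A lam K L) → B),
      (∀ ℓ : ↥L, x ↑ℓ = lam ⊔ mmVec (LamSub lam L (LtilSet A lam K L)) zLt ℓ) →
      ∀ k : ↥K,
        (lam ⊓ mmVec (mmMul (mmStar (subM A K K)) (subM A K L)) (fun _ => 1) k) ⊔
        mmVec (mmMul (mmMul (mmStar (subM A K K)) (subM A K (LtilSet A lam K L)))
          (LamSub lam (LtilSet A lam K L) (LtilSet A lam K L))) zLt k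
        = mmVec (mmMul (mmStar (subM A K K)) (subM A K L)) (subV x L) k := by
    intro zLt ha k
    obtain ⟨h1, h2, h3⟩ := hfromA zLt ha
    set T := mmMul (mmStar (subM A K K)) (subM A K L) with hT
    set M' := mmMul (mmStar (subM A K K)) (subM A K (LtilSet A lam K L)) with hM'
    have hentry : ∀ (ℓt : ↥(LtilSet A lam K L)) (h : (↑ℓt : Fin n) ∈ L),
        M' k ℓt = T k ⟨↑ℓt, h⟩ := fun ℓt h => rfl
    set w := mmVec (LamSub lam (LtilSet A lam K L) (LtilSet A lam K L)) zLt with hwdef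
    have hterm2 : mmVec (mmMul M' (LamSub lam (LtilSet A lam K L) (LtilSet A lam K L)))
        zLt k = ⨆ ℓt : ↥(LtilSet A lam K L), M' k ℓt ⊓ w ℓt := by
      rw [mmVec_assoc]
      rfl
    have hwle : ∀ ℓt : ↥(LtilSet A lam K L), w ℓt ≤ lam ⊔ zLt ℓt := by
      intro ℓt
      refine iSup_le fun j => ?_
      by_cases hej : (↑ℓt : Fin n) = ↑j
      · have : ℓt = j := Subtype.ext hej
        rw [LamSub, if_pos hej, this]
        exact inf_le_right.trans le_sup_right
      · rw [LamSub, if_neg hej]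
        exact inf_le_left.trans le_sup_left
    have hzlew : ∀ ℓt : ↥(LtilSet A lam K L), zLt ℓt ≤ w ℓt := by
      intro ℓt
      refine le_trans ?_ (le_iSup _ ℓt)
      rw [LamSub, if_pos rfl]
      exact le_inf (unitInterval.le_one _) le_rfl
    have hterm1 : lam ⊓ mmVec T (fun _ => (1:B)) k = ⨆ ℓ : ↥L, lam ⊓ T k ℓ := by
      rw [show mmVec T (fun _ => (1:B)) k = ⨆ ℓ : ↥L, T k ℓ ⊓ 1 from rfl]
      rw [inf_iSup_eq]
      exact iSup_congr fun ℓ => by rw [inf_of_le_left (le_oneB (T k ℓ))]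
    have hrhs : mmVec T (subV x L) k = ⨆ ℓ : ↥L, T k ℓ ⊓ x ↑ℓ := rfl
    rw [hterm1, hterm2, hrhs]
    apply le_antisymm
    · apply sup_le
      · refine iSup_le fun ℓ => ?_
        refine le_trans ?_ (le_iSup _ ℓ)
        exact le_inf inf_le_right (inf_le_left.trans (h3 ℓ))
      · refine iSup_le fun ℓt => ?_
        have hmemL : (↑ℓt : Fin n) ∈ L := hLtL ℓt.2
        refine le_trans ?_ (le_iSup _ (⟨↑ℓt, hmemL⟩ : ↥L))
        rw [← hentry ℓt hmemL]
        refine inf_le_inf_left _ ?_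
        refine le_trans (hwle ℓt) ?_
        rw [h2 ⟨↑ℓt, hmemL⟩ ℓt.2]
    · refine iSup_le fun ℓ => ?_
      by_cases hin : (↑ℓ : Fin n) ∈ LtilSet A lam K L
      · rw [h2 ℓ hin, inf_sup_left]
        apply sup_le
        · exact le_sup_left.trans' (le_trans (by rw [inf_comm]) (le_iSup (fun ℓ : ↥L => lam ⊓ T k ℓ) ℓ))
        · refine le_trans ?_ le_sup_right
          refine le_trans ?_ (le_iSup _ (⟨↑ℓ, hin⟩ : ↥(LtilSet A lam K L)))
          rw [hentry ⟨↑ℓ, hin⟩ ℓ.2]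
          exact inf_le_inf_left _ (hzlew ⟨↑ℓ, hin⟩)
      · rw [h1 ℓ hin]
        refine le_trans ?_ le_sup_left
        refine le_trans (by rw [inf_comm]) (le_iSup (fun ℓ : ↥L => lam ⊓ T k ℓ) ℓ)
  -- helpers to extract witnesses from strict sup bounds
  have hexK : ∀ {g : ↥K → B}, lam < (⨆ k : ↥K, g k) → ∃ k, lam < g k := by
    intro g h
    by_contra hcon
    push_neg at hcon
    exact absurd (iSup_le hcon) (not_le.mpr h)
  have hexS : ∀ {s : Finset (Fin n)} {f : Fin n → B}, lam < (⨆ i ∈ s, f i) →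
      ∃ i ∈ s, lam < f i := by
    intro s f h
    by_contra hcon
    push_neg at hcon
    exact absurd (iSup₂_le hcon) (not_le.mpr h)
  have hM'le : ∀ (k : ↥K) (ℓt : ↥(LtilSet A lam K L)),
      mmMul (mmStar (subM A K K)) (subM A K (LtilSet A lam K L)) k ℓt ≤ lam :=
    by
      intro k ℓt
      exact hTle k ⟨↑ℓt, hLtL ℓt.2⟩ ℓt.2
  refine ⟨⟨?_, ?_⟩, ?_⟩
  · -- forward direction
    intro hE
    obtain ⟨hEq, hK, hL⟩ := hE
    have hub : ∀ i ∈ L, ∀ j, A i j ⊓ x j ≤ lam := by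
      intro i hi j
      have h2 : A i j ⊓ x j ≤ mmVec A x i := le_iSup (fun j => A i j ⊓ x j) j
      rw [congrFun hEq i] at h2
      exact h2.trans inf_le_left
    have hxKle : ∀ k : ↥K, subV x K k ≤ lam := fun k => hK ↑k k.2
    have heqK : ∀ k : ↥K,
        mmVec (subM A K K) (subV x K) k ⊔ mmVec (subM A K L) (subV x L) k
          = subV x K k := by
      intro k
      have h3 := hsplit (fun j => A ↑k j ⊓ x j)
      calc mmVec (subM A K K) (subV x K) k ⊔ mmVec (subM A K L) (subV x L) k
          = ⨆ j, A ↑k j ⊓ x j := h3.symm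
        _ = lam ⊓ x ↑k := congrFun hEq ↑k
        _ = x ↑k := inf_eq_right.mpr (hK ↑k k.2)
    have hAxK : ∀ k : ↥K, mmVec (subM A K K) (subV x K) k ≤ subV x K k :=
      fun k => (heqK k) ▸ le_sup_left
    have hstarK : ∀ k : ↥K, mmVec (mmStar (subM A K K)) (subV x K) k ≤ x ↑k :=
      fun k => star_vec_le _ hAxK k
    have hflat : ∀ ℓ : ↥L, (↑ℓ : Fin n) ∉ LtilSet A lam K L → x ↑ℓ = lam := by
      intro ℓ hout
      have hge : lam ≤ x ↑ℓ := hL ↑ℓ ℓ.2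
      refine le_antisymm ?_ hge
      have hmemP : (↑ℓ : Fin n) ∈ LprimeSet A lam K L := by
        by_contra hc
        exact hout (Finset.mem_sdiff.mpr ⟨ℓ.2, hc⟩)
      rcases Finset.mem_union.mp hmemP with hcase | hcase
      · obtain ⟨i, hiL1, hgt⟩ := hexS (Finset.mem_filter.mp hcase).2
        have hiL : i ∈ L := by rw [← hL1set]; exact hiL1
        rcases inf_le_iff.mp (hub i hiL ↑ℓ) with h | h
        · exact absurd h (not_le.mpr hgt)
        · exact h
      · obtain ⟨k, hk⟩ := hexK (Finset.mem_filter.mp hcase).2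
        have hk2 : lam < ⨆ k' : ↥K, mmStar (subM A K K) k k' ⊓ A ↑k' ↑ℓ := hk
        obtain ⟨k', hk'⟩ := hexK hk2
        rw [lt_inf_iff] at hk'
        obtain ⟨hSgt, hAgt⟩ := hk'
        have h5 : A ↑k' ↑ℓ ⊓ x ↑ℓ ≤ x ↑k' := by
          have h6 : A ↑k' ↑ℓ ⊓ x ↑ℓ ≤ mmVec A x ↑k' := le_iSup (fun j => A ↑k' j ⊓ x j) ↑ℓ
          rw [congrFun hEq ↑k'] at h6
          exact h6.trans inf_le_right
        have h7 : mmStar (subM A K K) k k' ⊓ x ↑k' ≤ x ↑k := by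
          refine le_trans ?_ (hstarK k)
          exact le_iSup (fun j : ↥K => mmStar (subM A K K) k j ⊓ subV x K j) k'
        by_contra hxg
        push_neg at hxg
        have hlt : lam < x ↑k := by
          have : lam < mmStar (subM A K K) k k' ⊓ (A ↑k' ↑ℓ ⊓ x ↑ℓ) :=
            lt_inf_iff.mpr ⟨hSgt, lt_inf_iff.mpr ⟨hAgt, hxg⟩⟩
          refine this.trans_le ?_
          exact le_trans (inf_le_inf_left _ h5) h7
        exact absurd (hK ↑k k.2) (not_le.mpr hlt)
    have haA : ∀ ℓ : ↥L, x ↑ℓ = lam ⊔ mmVec (LamSub lam L (LtilSet A lam K L))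
        (fun j : ↥(LtilSet A lam K L) => x ↑j) ℓ := by
      intro ℓ
      by_cases hin : (↑ℓ : Fin n) ∈ LtilSet A lam K L
      · apply le_antisymm
        · refine le_trans ?_ le_sup_right
          refine le_trans ?_ (le_iSup _ (⟨↑ℓ, hin⟩ : ↥(LtilSet A lam K L)))
          rw [LamSub, if_pos rfl]
          exact le_inf (le_oneB _) le_rfl
        · refine sup_le (hL ↑ℓ ℓ.2) (iSup_le fun j => ?_)
          by_cases hej : (↑ℓ : Fin n) = ↑j
          · rw [LamSub, if_pos hej]
            exact inf_le_right.trans (le_of_eq (congrArg x hej.symm))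
          · rw [LamSub, if_neg hej]
            exact inf_le_left.trans (hL ↑ℓ ℓ.2)
      · rw [hflat ℓ hin]
        symm
        refine sup_eq_left.mpr (iSup_le fun j => ?_)
        have hne : (↑ℓ : Fin n) ≠ ↑j := fun h => hin (h ▸ j.2)
        rw [LamSub, if_neg hne]
        exact inf_le_left
    refine ⟨fun j => x ↑j, fun k => x ↑k, haA, fun k => ?_⟩
    have hdec := fwd_decomp (subM A K K) lam hxKle heqK k
    have hSb : mmVec (mmStar (subM A K K)) (fun j => mmVec (subM A K L) (subV x L) j) k
        = mmVec (mmMul (mmStar (subM A K K)) (subM A K L)) (subV x L) k :=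
      (mmVec_assoc _ _ _ k).symm
    rw [hSb] at hdec
    rw [hKid (fun j => x ↑j) haA k]
    exact hdec
  · -- backward direction
    rintro ⟨zLt, zK, ha, hb⟩
    obtain ⟨h1, h2, h3⟩ := hfromA zLt ha
    have hxKeq : ∀ k : ↥K, x ↑k =
        mmVec (mmStar (subM A K K)) (fun j => mmVec (subM A K L) (subV x L) j) k
        ⊔ mmVec (mmStarLam (subM A K K) lam) zK k := by
      intro k
      have hSb : mmVec (mmStar (subM A K K)) (fun j => mmVec (subM A K L) (subV x L) j) k
          = mmVec (mmMul (mmStar (subM A K K)) (subM A K L)) (subV x L) k :=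
        (mmVec_assoc _ _ _ k).symm
      rw [hSb, ← hKid zLt ha k]
      exact hb k
    have hxKle : ∀ i ∈ K, x i ≤ lam := by
      intro i hi
      calc x i = _ := hb ⟨i, hi⟩
        _ ≤ lam := by
          refine sup_le (sup_le inf_le_left ?_) ?_
          · rw [mmVec_assoc]
            refine iSup_le fun ℓt => ?_
            exact inf_le_left.trans (hM'le ⟨i, hi⟩ ℓt)
          · refine iSup_le fun j => ?_
            exact inf_le_left.trans (inf_le_left.trans inf_le_left)
    refine ⟨funext fun i => ?_, hxKle, fun i hi => h3 ⟨i, hi⟩⟩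
    rcases hmem i with hiK | hiL
    · rw [inf_eq_right.mpr (hxKle i hiK)]
      have hbf := bwd_fixed (subM A K K) lam
        (fun j => mmVec (subM A K L) (subV x L) j) zK ⟨i, hiK⟩
      have hcg : mmVec (subM A K K) (subV x K) ⟨i, hiK⟩
          = mmVec (subM A K K) (fun j =>
              mmVec (mmStar (subM A K K)) (fun l => mmVec (subM A K L) (subV x L) l) j
              ⊔ mmVec (mmStarLam (subM A K K) lam) zK j) ⟨i, hiK⟩ :=
        by
          refine mmVec_congr (u := subV x K) (fun j => ?_) (⟨i, hiK⟩ : ↥K)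
          exact hxKeq j
      calc mmVec A x i
          = mmVec (subM A K K) (subV x K) ⟨i, hiK⟩
            ⊔ mmVec (subM A K L) (subV x L) ⟨i, hiK⟩ := hsplit (fun j => A i j ⊓ x j)
        _ = mmVec (subM A K K) (fun j =>
              mmVec (mmStar (subM A K K)) (fun l => mmVec (subM A K L) (subV x L) l) j
              ⊔ mmVec (mmStarLam (subM A K K) lam) zK j) ⟨i, hiK⟩
            ⊔ mmVec (subM A K L) (subV x L) ⟨i, hiK⟩ := by rw [hcg]
        _ = mmVec (mmStar (subM A K K)) (fun l => mmVec (subM A K L) (subV x L) l) ⟨i, hiK⟩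
            ⊔ mmVec (mmStarLam (subM A K K) lam) zK ⟨i, hiK⟩ := hbf
        _ = x i := (hxKeq ⟨i, hiK⟩).symm
    · rw [inf_eq_left.mpr (h3 ⟨i, hiL⟩)]
      apply le_antisymm
      · refine iSup_le fun j => ?_
        rcases hmem j with hjK | hjL
        · exact inf_le_right.trans (hxKle j hjK)
        · by_cases hjt : j ∈ LtilSet A lam K L
          · exact inf_le_left.trans (hnotgt j hjt i hiL)
          · exact inf_le_right.trans (le_of_eq (h1 ⟨j, hjL⟩ hjt))
      · have h5 : lam ≤ ⨆ ℓ : ↥L, A i ↑ℓ := by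
          have h6 := hL1 i hiL
          rwa [show (⨆ j ∈ L, A i j) = ⨆ ℓ : ↥L, A i ↑ℓ from iSup_subtype'] at h6
        calc lam = lam ⊓ lam := (inf_idem lam).symm
          _ ≤ (⨆ ℓ : ↥L, A i ↑ℓ) ⊓ lam := inf_le_inf_right _ h5
          _ = ⨆ ℓ : ↥L, (A i ↑ℓ ⊓ lam) := iSup_inf_eq _ _
          _ ≤ ⨆ ℓ : ↥L, (A i ↑ℓ ⊓ x ↑ℓ) := iSup_mono fun ℓ => inf_le_inf_left _ (h3 ℓ)
          _ ≤ ⨆ j, A i j ⊓ x j := iSup_le fun ℓ => le_iSup (fun j => A i j ⊓ x j) ↑ℓ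
  · -- moreover
    intro hE
    obtain ⟨hEq, hK, hL⟩ := hE
    funext i
    apply le_antisymm
    · refine star_vec_le A (fun j => ?_) i
      rw [congrFun hEq j]
      exact inf_le_right
    · exact le_star_vec A x i
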